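/- Let d ≥ 1 and let g ∈ F₂[[X]] be the power series whose coefficient at X^m is 1 if and only if m = 2^{kd} for some k ≥ 0. Then g is algebraic over the rational function field F₂(X), and its degree of algebraicity is exactly 2^d. -/

import Mathlib

open scoped RatFunc

open Polynomial PowerSeries

-- x * x = x in ZMod 2
private lemma zmod2_mul_self : ∀ x : ZMod 2, x * x = x := by decide

/-- Coefficients of the square of a power series over F₂. -/
private lemma coeff_sq (f : PowerSeries (ZMod 2)) (m : ℕ) :
    PowerSeries.coeff m (f ^ 2) =
      if Even m then PowerSeries.coeff (m / 2) f else 0 := by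
  rw [sq, PowerSeries.coeff_mul]
  by_cases hm : Even m
  · obtain ⟨t, ht⟩ := hm
    subst ht
    have hmem : ((t, t) : ℕ × ℕ) ∈ Finset.HasAntidiagonal.antidiagonal (t + t) := by
      simp [Finset.HasAntidiagonal.mem_antidiagonal]
    rw [← Finset.add_sum_erase _ _ hmem]
    have hz : ∑ p ∈ (Finset.HasAntidiagonal.antidiagonal (t + t)).erase (t, t),
        PowerSeries.coeff p.1 f * PowerSeries.coeff p.2 f = 0 := by
      apply Finset.sum_involution (fun p _ => (p.2, p.1))
      · intro p _
        rw [mul_comm]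
        exact CharTwo.add_self_eq_zero _
      · intro p hp _
        have hp1 := Finset.mem_of_mem_erase hp
        have hpne := Finset.ne_of_mem_erase hp
        rw [Finset.HasAntidiagonal.mem_antidiagonal] at hp1
        intro hcon
        apply hpne
        have : p.2 = p.1 := congrArg Prod.fst hcon
        have ht1 : p.1 = t := by omega
        have ht2 : p.2 = t := by omega
        exact Prod.ext ht1 ht2
      · intro p hp
        have hp1 := Finset.mem_of_mem_erase hp
        have hpne := Finset.ne_of_mem_erase hp
        rw [Finset.HasAntidiagonal.mem_antidiagonal] at hp1
        apply Finset.mem_erase_of_ne_of_mem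
        · intro hcon
          apply hpne
          have h2 : p.2 = t := congrArg Prod.fst hcon
          have h1 : p.1 = t := by omega
          exact Prod.ext h1 h2
        · rw [Finset.HasAntidiagonal.mem_antidiagonal]; omega
      · intro p _; rfl
    rw [hz, add_zero, if_pos ⟨t, rfl⟩]
    have : (t + t) / 2 = t := by omega
    rw [this, zmod2_mul_self _]
  · rw [if_neg hm]
    apply Finset.sum_involution (fun p _ => (p.2, p.1))
    · intro p _
      rw [mul_comm]
      exact CharTwo.add_self_eq_zero _
    · intro p hp _
      rw [Finset.HasAntidiagonal.mem_antidiagonal] at hp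
      intro hcon
      have : p.2 = p.1 := congrArg Prod.fst hcon
      exact hm ⟨p.1, by omega⟩
    · intro p hp
      rw [Finset.HasAntidiagonal.mem_antidiagonal] at hp ⊢
      omega
    · intro p _; rfl


/-- The map sending an inner polynomial to its evaluation at the outer variable. -/
private noncomputable def Tswap : Polynomial (ZMod 2) →+* Polynomial (Polynomial (ZMod 2)) :=
  Polynomial.eval₂RingHom ((Polynomial.C).comp Polynomial.C) Polynomial.X

private lemma Tswap_C (r : ZMod 2) : Tswap (Polynomial.C r) = Polynomial.C (Polynomial.C r) :=
  Polynomial.eval₂_C _ _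

private lemma Tswap_X : Tswap Polynomial.X = Polynomial.X := Polynomial.eval₂_X _ _

/-- The variable-swap endomorphism of `F₂[X][Y]`. -/
private noncomputable def swapHom :
    Polynomial (Polynomial (ZMod 2)) →+* Polynomial (Polynomial (ZMod 2)) :=
  Polynomial.eval₂RingHom Tswap (Polynomial.C Polynomial.X)

private lemma swapHom_C (p : Polynomial (ZMod 2)) : swapHom (Polynomial.C p) = Tswap p :=
  Polynomial.eval₂_C _ _

private lemma swapHom_X : swapHom Polynomial.X = Polynomial.C Polynomial.X :=
  Polynomial.eval₂_X _ _

private lemma swapHom_invol :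
    swapHom.comp swapHom = RingHom.id (Polynomial (Polynomial (ZMod 2))) := by
  apply Polynomial.ringHom_ext'
  · apply Polynomial.ringHom_ext'
    · ext r
      simp [swapHom_C, Tswap_C]
    · simp [swapHom_C, Tswap_C, Tswap_X, swapHom_X]
  · simp [swapHom_C, Tswap_X, swapHom_X]

/-- The variable-swap ring automorphism of `F₂[X][Y]`. -/
private noncomputable def swapEquiv :
    Polynomial (Polynomial (ZMod 2)) ≃+* Polynomial (Polynomial (ZMod 2)) :=
  RingEquiv.ofRingHom swapHom swapHom swapHom_invol swapHom_invol

open Classical in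
/-- The power series `g = Σ_{k≥0} X^{2^{kd}} ∈ F₂[[X]]` is
algebraic over `F₂(X)` of degree exactly `2^d` (viewing `F₂[[X]]` inside the
Laurent series field, on which `F₂(X) = RatFunc (ZMod 2)` acts). -/
theorem stmt13 (d : ℕ) (hd : 1 ≤ d)
    (g : PowerSeries (ZMod 2))
    (hg : g = PowerSeries.mk fun m =>
      if ∃ k : ℕ, m = 2 ^ (k * d) then 1 else 0) :
    ∃ P : Polynomial (RatFunc (ZMod 2)), P ≠ 0 ∧ P.natDegree = 2 ^ d ∧
      Polynomial.aeval (g : LaurentSeries (ZMod 2)) P = 0 ∧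
      ∀ Q : Polynomial (RatFunc (ZMod 2)), Q ≠ 0 →
        Polynomial.aeval (g : LaurentSeries (ZMod 2)) Q = 0 → 2 ^ d ≤ Q.natDegree := by
  -- auxiliary power series u j = Σ_k X^(2^(k*d+j))
  set u : ℕ → PowerSeries (ZMod 2) := fun j => PowerSeries.mk fun m =>
    if ∃ k : ℕ, m = 2 ^ (k * d + j) then 1 else 0 with hu_def
  have hu0 : u 0 = g := by
    rw [hg]; ext m; simp [hu_def]
  have husq : ∀ j, (u j) ^ 2 = u (j + 1) := by
    intro j
    ext m
    rw [coeff_sq, hu_def]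
    simp only [PowerSeries.coeff_mk]
    by_cases hm : Even m
    · rw [if_pos hm]
      congr 1
      apply propext
      constructor
      · rintro ⟨k, hk⟩
        obtain ⟨t, rfl⟩ := hm
        refine ⟨k, ?_⟩
        have hpow : (2:ℕ) ^ (k * d + (j + 1)) = 2 * 2 ^ (k * d + j) := by ring
        omega
      · rintro ⟨k, hk⟩
        refine ⟨k, ?_⟩
        have hpow : (2:ℕ) ^ (k * d + (j + 1)) = 2 * 2 ^ (k * d + j) := by ring
        rw [hpow] at hk
        omega
    · rw [if_neg hm, eq_comm, if_neg]
      rintro ⟨k, hk⟩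
      have hpow : (2:ℕ) ^ (k * d + (j + 1)) = 2 * 2 ^ (k * d + j) := by ring
      exact hm ⟨2 ^ (k * d + j), by omega⟩
  have hupow : ∀ j, g ^ (2 ^ j) = u j := by
    intro j
    induction j with
    | zero => simpa using hu0.symm
    | succ n ih => rw [pow_succ, pow_mul, ih, husq]
  -- the key identity
  have hkey : g ^ (2 ^ d) + g + PowerSeries.X = 0 := by
    rw [hupow d, hg]
    ext m
    simp only [map_add, PowerSeries.coeff_mk, PowerSeries.coeff_X, hu_def, map_zero]
    by_cases h1 : m = 1
    · subst h1
      rw [if_neg, if_pos ⟨0, by simp⟩, if_pos rfl]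
      · decide
      · rintro ⟨k, hk⟩
        have : 1 ≤ k * d + d := by omega
        have := Nat.one_lt_two_pow_iff.mpr (by omega : k * d + d ≠ 0)
        omega
    · rw [if_neg h1]
      by_cases hB : ∃ k : ℕ, m = 2 ^ (k * d)
      · obtain ⟨k, hk⟩ := hB
        have hk1 : 1 ≤ k := by
          by_contra hcon
          have : k = 0 := by omega
          subst this; simp at hk; exact h1 hk
        obtain ⟨k', rfl⟩ : ∃ k', k = k' + 1 := ⟨k - 1, by omega⟩
        rw [if_pos ⟨k', by rw [hk]; congr 1; ring⟩, if_pos ⟨k' + 1, hk⟩]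
        decide
      · rw [if_neg, if_neg hB, add_zero, add_zero]
        rintro ⟨k, hk⟩
        exact hB ⟨k + 1, by rw [hk]; ring_nf⟩
  -- the annihilating polynomial over F₂[X]
  set R := Polynomial (ZMod 2)
  set K := RatFunc (ZMod 2)
  set L := LaurentSeries (ZMod 2)
  set q := 2 ^ d with hq
  have hq2 : 2 ≤ q := by
    calc 2 = 2 ^ 1 := (pow_one 2).symm
    _ ≤ 2 ^ d := Nat.pow_le_pow_right (by norm_num) hd
  set P₀ : Polynomial R := Polynomial.X ^ q + (Polynomial.X + Polynomial.C Polynomial.X) with hP₀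
  have hdegsmall : (Polynomial.X + Polynomial.C (Polynomial.X : R) : Polynomial R).degree
      < (q : WithBot ℕ) := by
    have h1 : (Polynomial.X + Polynomial.C (Polynomial.X : R) : Polynomial R).degree = 1 :=
      Polynomial.degree_X_add_C Polynomial.X
    rw [h1]
    exact_mod_cast (by omega : 1 < q)
  have hP₀monic : P₀.Monic := Polynomial.monic_X_pow_add hdegsmall
  have hP₀degree : P₀.degree = (q : WithBot ℕ) := by
    rw [hP₀, Polynomial.degree_add_eq_left_of_degree_lt, Polynomial.degree_X_pow]
    rw [Polynomial.degree_X_pow]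
    exact hdegsmall
  have hP₀deg : P₀.natDegree = q := Polynomial.natDegree_eq_of_degree_eq_some hP₀degree
  -- irreducibility of P₀ via the variable swap
  have hswapP₀ : swapEquiv P₀ =
      Polynomial.X + Polynomial.C (Polynomial.X ^ q + Polynomial.X) := by
    show swapHom P₀ = _
    rw [hP₀]
    rw [map_add, map_add, map_pow, swapHom_X, swapHom_C, Tswap_X, ← Polynomial.C_pow,
      Polynomial.C_add]
    ring
  have hP₀irr : Irreducible P₀ := by
    have hirr := (Polynomial.monic_X_add_C (Polynomial.X ^ q + Polynomial.X :
      Polynomial (ZMod 2))).irreducible_of_degree_eq_one (Polynomial.degree_X_add_C _)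
    rw [← hswapP₀] at hirr
    exact (MulEquiv.irreducible_iff swapEquiv).mp hirr
  -- pass to the fraction field via Gauss's lemma
  set P : Polynomial K := P₀.map (algebraMap R K) with hPdef
  have hPirr : Irreducible P :=
    (hP₀monic.irreducible_iff_irreducible_map_fraction_map).mp hP₀irr
  have hPmonic : P.Monic := hP₀monic.map _
  have hPne : P ≠ 0 := hPmonic.ne_zero
  have hPdeg : P.natDegree = q := by
    rw [hPdef, Polynomial.natDegree_map_eq_of_injective
      (IsFractionRing.injective R K), hP₀deg]
  -- the root property
  have haev : Polynomial.aeval (g : L) P = 0 := by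
    rw [hPdef, Polynomial.aeval_map_algebraMap]
    rw [hP₀]
    simp only [map_add, map_pow, Polynomial.aeval_X, Polynomial.aeval_C]
    have hX : algebraMap R L Polynomial.X = ((PowerSeries.X : PowerSeries (ZMod 2)) : L) := by
      rw [Polynomial.algebraMap_hahnSeries_apply]
      simp [PowerSeries.coe_X]
    rw [hX]
    have := congrArg (HahnSeries.ofPowerSeries ℤ (ZMod 2)) hkey
    rw [map_add, map_add, map_pow, map_zero] at this
    rw [← add_assoc]
    exact this
  refine ⟨P, hPne, hPdeg, haev, ?_⟩
  intro Q hQne hQaev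
  have hmin : P = minpoly K (g : L) :=
    minpoly.eq_of_irreducible_of_monic hPirr haev hPmonic
  have hdvd : minpoly K (g : L) ∣ Q := minpoly.dvd K _ hQaev
  calc 2 ^ d = P.natDegree := hPdeg.symm
    _ = (minpoly K (g : L)).natDegree := by rw [hmin]
    _ ≤ Q.natDegree := Polynomial.natDegree_le_of_dvd hdvd hQne
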